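/- For any real payoff vectors P00, P01, P10, P11 ∈ ℝ² and any λ00, λ01, λ10 ≥ 0 with λ00 + λ01 + λ10 = 1 and λ00 < 1, the EWL payoff vector at the strategy profile (U(0, −arccos√(λ01/(1−λ00)), 0), U(2·arccos√λ00, arccos√(λ01/(1−λ00)), 0)) equals λ00·P00 + λ01·P01 + λ10·P10. -/
import Mathlib


open Real

/-- The EWL payoff vector for a 2×2 bimatrix game with payoff vectors
`P00 P01 P10 P11 : ℝ × ℝ`, at the profile `(U(θ1,α1,β1), U(θ2,α2,β2))`. -/
noncomputable def ewlV (P00 P01 P10 P11 : ℝ × ℝ) (θ1 α1 β1 θ2 α2 β2 : ℝ) : ℝ × ℝ :=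
  ((cos (α1 + α2) * cos (θ1/2) * cos (θ2/2) +
    sin (β1 + β2) * sin (θ1/2) * sin (θ2/2))^2) • P00 +
  ((sin (α2 - β1) * sin (θ1/2) * cos (θ2/2) +
    cos (α1 - β2) * cos (θ1/2) * sin (θ2/2))^2) • P01 +
  ((cos (α2 - β1) * sin (θ1/2) * cos (θ2/2) +
    sin (α1 - β2) * cos (θ1/2) * sin (θ2/2))^2) • P10 +
  ((cos (β1 + β2) * sin (θ1/2) * sin (θ2/2) -
    sin (α1 + α2) * cos (θ1/2) * cos (θ2/2))^2) • P11

/-- A suitable two-parameter EWL strategy profile realizes any convex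
combination `λ00·P00 + λ01·P01 + λ10·P10` of three pure payoff vectors. -/
theorem ewl_convex_combination_00_01_10 (P00 P01 P10 P11 : ℝ × ℝ)
    (l00 l01 l10 : ℝ) (h00 : 0 ≤ l00) (h01 : 0 ≤ l01) (h10 : 0 ≤ l10)
    (hsum : l00 + l01 + l10 = 1) (hlt : l00 < 1) :
    ewlV P00 P01 P10 P11
      0 (-(Real.arccos (Real.sqrt (l01 / (1 - l00))))) 0
      (2 * Real.arccos (Real.sqrt l00)) (Real.arccos (Real.sqrt (l01 / (1 - l00)))) 0 =
      l00 • P00 + l01 • P01 + l10 • P10 := by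
  have h1 : (0:ℝ) < 1 - l00 := by linarith
  have hge : 0 ≤ l01 / (1 - l00) := div_nonneg h01 h1.le
  have hle : l01 / (1 - l00) ≤ 1 := by rw [div_le_one h1]; linarith
  set x := l01 / (1 - l00) with hx
  set a := Real.arccos (Real.sqrt x) with ha
  have hs1 : Real.sqrt x ≤ 1 := Real.sqrt_le_one.mpr hle
  have hca : Real.cos a = Real.sqrt x :=
    Real.cos_arccos (by nlinarith [Real.sqrt_nonneg x]) hs1
  have hsa2 : Real.sin a ^ 2 = 1 - x := by
    rw [ha, Real.sin_arccos, Real.sq_sqrt, Real.sq_sqrt hge]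
    nlinarith [Real.sq_sqrt hge, Real.sqrt_nonneg x]
  have hb : Real.sqrt l00 ≤ 1 := Real.sqrt_le_one.mpr hlt.le
  have hcb : Real.cos (Real.arccos (Real.sqrt l00)) = Real.sqrt l00 :=
    Real.cos_arccos (by nlinarith [Real.sqrt_nonneg l00]) hb
  have hsb2 : Real.sin (Real.arccos (Real.sqrt l00)) ^ 2 = 1 - l00 := by
    rw [Real.sin_arccos, Real.sq_sqrt, Real.sq_sqrt h00]
    nlinarith [Real.sq_sqrt h00, Real.sqrt_nonneg l00]
  have hθ2 : (2 * Real.arccos (Real.sqrt l00)) / 2 = Real.arccos (Real.sqrt l00) := by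
    ring
  simp only [ewlV, hθ2, neg_add_cancel, Real.cos_zero, Real.sin_zero, zero_div,
    sub_zero, zero_sub, Real.cos_neg, Real.sin_neg, hca, hcb, mul_zero, zero_mul,
    mul_one, one_mul, add_zero, zero_add, mul_neg, neg_zero, neg_neg, sub_neg_eq_add]
  have e00 : Real.sqrt l00 ^ 2 = l00 := Real.sq_sqrt h00
  have e01 : (Real.sqrt x * Real.sin (Real.arccos (Real.sqrt l00))) ^ 2 = l01 := by
    rw [mul_pow, hsb2, Real.sq_sqrt hge, hx]
    field_simp
  have e10 : (Real.sin a * Real.sin (Real.arccos (Real.sqrt l00))) ^ 2 = l10 := by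
    rw [mul_pow, hsa2, hsb2, hx]
    field_simp
    ring_nf
    nlinarith [hsum]
  have e10' : (-Real.sin a * Real.sin (Real.arccos (Real.sqrt l00))) ^ 2 = l10 := by
    rw [← e10]; ring
  rw [e00, e01, e10']
  simp
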